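/- Separability criterion (Theorem 1): If ρ ∈ ℂ^{d_A d_B × d_A d_B} is a separable bipartite state, i.e., ρ = Σᵢ pᵢ ρ_A^i ⊗ ρ_B^i with pᵢ ≥ 0, Σᵢ pᵢ = 1, and each ρ_A^i, ρ_B^i a pure state, then for any real α, β and natural number l, ‖M_{α,β}^l(ρ)‖_tr ≤ √((lα²+1)(lβ²+1)). -/

import Mathlib

open Matrix
open scoped Kronecker ComplexOrder

/-- Column-stacking vectorization: `vec A (j, i) = A i j`. -/
def vec {m n : Type*} (A : Matrix m n ℂ) : n × m → ℂ := fun p => A p.2 p.1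

/-- The realignment map across the bipartition `A | B`. -/
def realign {A B : Type*} (ρ : Matrix (A × B) (A × B) ℂ) :
    Matrix (A × A) (B × B) ℂ :=
  Matrix.of fun r c => ρ (r.2, c.2) (r.1, c.1)

/-- Partial trace over the first tensor factor. -/
noncomputable def ptrA {A B : Type*} [Fintype A] (ρ : Matrix (A × B) (A × B) ℂ) :
    Matrix B B ℂ :=
  Matrix.of fun i j => ∑ k, ρ (k, i) (k, j)

/-- Partial trace over the second tensor factor. -/
noncomputable def ptrB {A B : Type*} [Fintype B] (ρ : Matrix (A × B) (A × B) ℂ) :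
    Matrix A A ℂ :=
  Matrix.of fun i j => ∑ k, ρ (i, k) (j, k)

/-- The trace norm `‖A‖_tr = tr √(Aᴴ A)`, i.e. the sum of singular values. -/
noncomputable def traceNorm {m n : Type*} [Fintype m] [Fintype n] [DecidableEq n]
    (A : Matrix m n ℂ) : ℝ :=
  (((Matrix.posSemidef_conjTranspose_mul_self A).1.eigenvectorUnitary *
    Matrix.diagonal (((↑) : ℝ → ℂ) ∘ (√·) ∘ (Matrix.posSemidef_conjTranspose_mul_self A).1.eigenvalues) *
    (star (Matrix.posSemidef_conjTranspose_mul_self A).1.eigenvectorUnitary : Matrix n n ℂ)).trace).re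

/-- The matrix `M_{α,β}^l(ρ) = [[αβ E_{l×l}, α ω_l(tr_A ρ)ᵀ],
[β ω_l(tr_B ρ), R(ρ)]]`. -/
noncomputable def Mblock (α β : ℝ) (l : ℕ) {A B : Type*} [Fintype A] [Fintype B]
    (ρ : Matrix (A × B) (A × B) ℂ) :
    Matrix (Fin l ⊕ A × A) (Fin l ⊕ B × B) ℂ :=
  Matrix.fromBlocks
    (Matrix.of fun _ _ => ((α * β : ℝ) : ℂ))
    (Matrix.of fun _ c => (α : ℂ) * _root_.vec (ptrA ρ) c)
    (Matrix.of fun r _ => (β : ℂ) * _root_.vec (ptrB ρ) r)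
    (realign ρ)

theorem traceNorm_le_of_rep {ι m n : Type*} [Fintype ι] [Fintype m] [Fintype n]
    [DecidableEq n]
    (A : Matrix m n ℂ) (c : ι → ℝ) (x : ι → m → ℂ) (y : ι → n → ℂ)
    (hc : ∀ i, 0 ≤ c i)
    (hrep : ∀ r s, A r s = ∑ i, (c i : ℂ) * x i r * star (y i s)) :
    traceNorm A ≤
      ∑ i, c i * (Real.sqrt (∑ r, ‖x i r‖ ^ 2) * Real.sqrt (∑ s, ‖y i s‖ ^ 2)) := by
  classical
  set hAA := Matrix.posSemidef_conjTranspose_mul_self A with hAAdef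
  have hSH : (Aᴴ * A).IsHermitian := hAA.1
  set μ : n → ℝ := fun k => √(hSH.eigenvalues k) with hμdef
  set W := hSH.eigenvectorBasis with hWdef
  have hμ0 : ∀ k, 0 ≤ μ k := fun k => Real.sqrt_nonneg _
  -- the trace of sqrt is the sum of its eigenvalues
  have htrace : traceNorm A = ∑ k, μ k := by
    have h1 : (hSH.eigenvectorUnitary * Matrix.diagonal (((↑) : ℝ → ℂ) ∘ (√·) ∘ hSH.eigenvalues) *
        (star hSH.eigenvectorUnitary : Matrix n n ℂ)).trace = ∑ k, (μ k : ℂ) := by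
      rw [Matrix.trace_mul_cycle]
      rw [Unitary.coe_star_mul_self, one_mul, Matrix.trace_diagonal]
      rfl
    show ((hSH.eigenvectorUnitary * Matrix.diagonal (((↑) : ℝ → ℂ) ∘ (√·) ∘ hSH.eigenvalues) *
        (star hSH.eigenvectorUnitary : Matrix n n ℂ)).trace).re = _
    rw [h1, ← Complex.ofReal_sum, Complex.ofReal_re]
  -- eigen-equation for AᴴA
  have hAAw : ∀ k, (Aᴴ * A) *ᵥ ⇑(W k) = (μ k ^ 2) • ⇑(W k) := by
    intro k
    rw [hSH.mulVec_eigenvectorBasis, hμdef]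
    dsimp only
    rw [Real.sq_sqrt (hAA.eigenvalues_nonneg k : 0 ≤ hSH.eigenvalues k)]
  -- orthonormality of W as dot products
  have hWd : ∀ j k, star ⇑(W j) ⬝ᵥ ⇑(W k) = if j = k then 1 else 0 := by
    intro j k
    have := orthonormal_iff_ite.mp W.orthonormal j k
    rw [dotProduct_comm]
    simpa [EuclideanSpace.inner_eq_star_dotProduct] using this
  -- dot products of A *ᵥ W k
  have hdot : ∀ j k, star (A *ᵥ ⇑(W j)) ⬝ᵥ (A *ᵥ ⇑(W k))
      = if j = k then ((μ k : ℂ) ^ 2) else 0 := by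
    intro j k
    rw [star_mulVec, ← Matrix.dotProduct_mulVec, Matrix.mulVec_mulVec, hAAw,
      dotProduct_smul]
    rw [hWd]
    by_cases h : j = k <;> simp [h, Complex.real_smul]
  -- the left singular vectors
  set zf : n → m → ℂ := fun k => ((μ k : ℂ)⁻¹) • (A *ᵥ ⇑(W k)) with hzfdef
  have hzd : ∀ j k, star (zf j) ⬝ᵥ (zf k)
      = if j = k then ((μ k : ℂ)⁻¹ ^ 2 * (μ k : ℂ) ^ 2) else 0 := by
    intro j k
    simp only [hzfdef, star_smul, smul_dotProduct, dotProduct_smul, hdot,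
      star_inv₀, Complex.star_def, Complex.conj_ofReal, smul_eq_mul]
    by_cases h : j = k <;> simp [h] <;> ring
  -- orthonormal family on the support of μ
  set T : Finset n := Finset.univ.filter (fun k => μ k ≠ 0) with hTdef
  set z : {k // μ k ≠ 0} → EuclideanSpace ℂ m :=
    fun k => (WithLp.equiv 2 _).symm (zf k.1) with hzdef
  have hzorth : Orthonormal ℂ z := by
    rw [orthonormal_iff_ite]
    intro j k
    have : (inner ℂ (z j) (z k) : ℂ) = star (zf j.1) ⬝ᵥ (zf k.1) := by
      rw [EuclideanSpace.inner_eq_star_dotProduct]; exact dotProduct_comm _ _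
    rw [this, hzd]
    by_cases h : j = k
    · have h2 : (μ k.1 : ℂ) ≠ 0 := by exact_mod_cast k.2
      simp only [h, if_pos rfl]
      rw [← mul_pow, inv_mul_cancel₀ h2, one_pow]
    · have : j.1 ≠ k.1 := fun hh => h (Subtype.ext hh)
      simp [this, h]
  -- value of the singular triple
  have hμval : ∀ k, μ k ≠ 0 → star (zf k) ⬝ᵥ (A *ᵥ ⇑(W k)) = (μ k : ℂ) := by
    intro k hk
    have hkC : (μ k : ℂ) ≠ 0 := by exact_mod_cast hk
    simp only [hzfdef, star_smul, smul_dotProduct, hdot, if_pos rfl, star_inv₀,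
      Complex.star_def, Complex.conj_ofReal, smul_eq_mul, if_true]
    rw [pow_two, ← mul_assoc, inv_mul_cancel₀ hkC, one_mul]
  -- expansion of the quadratic form
  have hmulV : ∀ v : n → ℂ, A *ᵥ v = ∑ i, ((c i : ℂ) * (star (y i) ⬝ᵥ v)) • x i := by
    intro v; funext r
    simp only [Matrix.mulVec, dotProduct, hrep, Finset.sum_apply, Pi.smul_apply,
      smul_eq_mul, Finset.sum_mul]
    rw [Finset.sum_comm]
    refine Finset.sum_congr rfl fun i _ => ?_
    rw [Finset.mul_sum, Finset.sum_mul]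
    refine Finset.sum_congr rfl fun s _ => ?_
    simp only [Pi.star_apply]
    ring
  have hexp : ∀ (u : m → ℂ) (v : n → ℂ),
      star u ⬝ᵥ (A *ᵥ v) = ∑ i, (c i : ℂ) * (star u ⬝ᵥ x i) * (star (y i) ⬝ᵥ v) := by
    intro u v
    have hlin : ∀ (a : ι → ℂ) (xs : ι → m → ℂ),
        star u ⬝ᵥ (∑ i, a i • xs i) = ∑ i, a i * (star u ⬝ᵥ xs i) := by
      intro a xs
      simp only [dotProduct, Finset.sum_apply, Pi.smul_apply, smul_eq_mul,
        Pi.star_apply, Finset.mul_sum]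
      rw [Finset.sum_comm]
      exact Finset.sum_congr rfl fun i _ => Finset.sum_congr rfl fun r _ => by ring
    rw [hmulV, hlin]
    exact Finset.sum_congr rfl fun i _ => by ring
  -- pointwise bound
  have hptw : ∀ k : {k // μ k ≠ 0}, μ k.1 ≤
      ∑ i, c i * (‖star (zf k.1) ⬝ᵥ x i‖ * ‖star (y i) ⬝ᵥ ⇑(W k.1)‖) := by
    intro k
    have h1 : (μ k.1 : ℂ)
        = ∑ i, (c i : ℂ) * (star (zf k.1) ⬝ᵥ x i) * (star (y i) ⬝ᵥ ⇑(W k.1)) := by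
      rw [← hexp, hμval k.1 k.2]
    have h2 : μ k.1 = (∑ i, (c i : ℂ) * (star (zf k.1) ⬝ᵥ x i) * (star (y i) ⬝ᵥ ⇑(W k.1))).re := by
      rw [← h1, Complex.ofReal_re]
    rw [h2, Complex.re_sum]
    refine Finset.sum_le_sum fun i _ => ?_
    calc ((c i : ℂ) * (star (zf k.1) ⬝ᵥ x i) * (star (y i) ⬝ᵥ ⇑(W k.1))).re
        ≤ ‖(c i : ℂ) * (star (zf k.1) ⬝ᵥ x i) * (star (y i) ⬝ᵥ ⇑(W k.1))‖ :=
          Complex.re_le_norm _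
      _ = c i * (‖star (zf k.1) ⬝ᵥ x i‖ * ‖star (y i) ⬝ᵥ ⇑(W k.1)‖) := by
          simp [norm_mul, Complex.norm_real, abs_of_nonneg (hc i)]; ring
  -- Bessel bounds
  have hbx : ∀ i, ∑ k : {k // μ k ≠ 0}, ‖star (zf k.1) ⬝ᵥ x i‖ ^ 2 ≤ ∑ r, ‖x i r‖ ^ 2 := by
    intro i
    have hb := hzorth.sum_inner_products_le (s := Finset.univ)
      ((WithLp.equiv 2 (m → ℂ)).symm (x i))
    have h1 : ∀ k : {k // μ k ≠ 0},
        (inner ℂ (z k) ((WithLp.equiv 2 (m → ℂ)).symm (x i)) : ℂ) = star (zf k.1) ⬝ᵥ x i :=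
      fun k => by rw [EuclideanSpace.inner_eq_star_dotProduct]; exact dotProduct_comm _ _
    have h2 : ‖(WithLp.equiv 2 (m → ℂ)).symm (x i)‖ ^ 2 = ∑ r, ‖x i r‖ ^ 2 := by
      rw [EuclideanSpace.norm_eq, Real.sq_sqrt (Finset.sum_nonneg fun _ _ => sq_nonneg _)]
      rfl
    calc ∑ k : {k // μ k ≠ 0}, ‖star (zf k.1) ⬝ᵥ x i‖ ^ 2
        = ∑ k : {k // μ k ≠ 0}, ‖(inner ℂ (z k) ((WithLp.equiv 2 (m → ℂ)).symm (x i)) : ℂ)‖ ^ 2 := by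
          exact Finset.sum_congr rfl fun k _ => by rw [h1]
      _ ≤ ‖(WithLp.equiv 2 (m → ℂ)).symm (x i)‖ ^ 2 := hb
      _ = ∑ r, ‖x i r‖ ^ 2 := h2
  have hby : ∀ i, ∑ k : {k // μ k ≠ 0}, ‖star (y i) ⬝ᵥ ⇑(W k.1)‖ ^ 2 ≤ ∑ s, ‖y i s‖ ^ 2 := by
    intro i
    have hworth : Orthonormal ℂ (fun k : {k // μ k ≠ 0} => W k.1) :=
      W.orthonormal.comp _ Subtype.val_injective
    have hb := hworth.sum_inner_products_le (s := Finset.univ)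
      ((WithLp.equiv 2 (n → ℂ)).symm (y i))
    have h1 : ∀ k : {k // μ k ≠ 0},
        ‖star (y i) ⬝ᵥ ⇑(W k.1)‖
          = ‖(inner ℂ (W k.1) ((WithLp.equiv 2 (n → ℂ)).symm (y i)) : ℂ)‖ := by
      intro k
      rw [← norm_inner_symm]
      congr 1; rw [EuclideanSpace.inner_eq_star_dotProduct]; exact dotProduct_comm _ _
    have h2 : ‖(WithLp.equiv 2 (n → ℂ)).symm (y i)‖ ^ 2 = ∑ s, ‖y i s‖ ^ 2 := by
      rw [EuclideanSpace.norm_eq, Real.sq_sqrt (Finset.sum_nonneg fun _ _ => sq_nonneg _)]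
      rfl
    calc ∑ k : {k // μ k ≠ 0}, ‖star (y i) ⬝ᵥ ⇑(W k.1)‖ ^ 2
        = ∑ k : {k // μ k ≠ 0},
            ‖(inner ℂ (W k.1) ((WithLp.equiv 2 (n → ℂ)).symm (y i)) : ℂ)‖ ^ 2 := by
          exact Finset.sum_congr rfl fun k _ => by rw [h1]
      _ ≤ ‖(WithLp.equiv 2 (n → ℂ)).symm (y i)‖ ^ 2 := hb
      _ = ∑ s, ‖y i s‖ ^ 2 := h2
  -- final chain
  calc traceNorm A = ∑ k, μ k := htrace
    _ = ∑ k ∈ T, μ k := (Finset.sum_filter_ne_zero _).symm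
    _ = ∑ k : {k // μ k ≠ 0}, μ k.1 := Finset.sum_subtype T (fun k => by simp [hTdef]) μ
    _ ≤ ∑ k : {k // μ k ≠ 0},
          ∑ i, c i * (‖star (zf k.1) ⬝ᵥ x i‖ * ‖star (y i) ⬝ᵥ ⇑(W k.1)‖) :=
        Finset.sum_le_sum fun k _ => hptw k
    _ = ∑ i, ∑ k : {k // μ k ≠ 0},
          c i * (‖star (zf k.1) ⬝ᵥ x i‖ * ‖star (y i) ⬝ᵥ ⇑(W k.1)‖) := Finset.sum_comm
    _ ≤ ∑ i, c i * (Real.sqrt (∑ r, ‖x i r‖ ^ 2) * Real.sqrt (∑ s, ‖y i s‖ ^ 2)) := by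
        refine Finset.sum_le_sum fun i _ => ?_
        rw [← Finset.mul_sum]
        refine mul_le_mul_of_nonneg_left ?_ (hc i)
        calc ∑ k : {k // μ k ≠ 0}, ‖star (zf k.1) ⬝ᵥ x i‖ * ‖star (y i) ⬝ᵥ ⇑(W k.1)‖
            ≤ Real.sqrt (∑ k : {k // μ k ≠ 0}, ‖star (zf k.1) ⬝ᵥ x i‖ ^ 2) *
              Real.sqrt (∑ k : {k // μ k ≠ 0}, ‖star (y i) ⬝ᵥ ⇑(W k.1)‖ ^ 2) :=
              Real.sum_mul_le_sqrt_mul_sqrt _ _ _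
          _ ≤ Real.sqrt (∑ r, ‖x i r‖ ^ 2) * Real.sqrt (∑ s, ‖y i s‖ ^ 2) :=
              mul_le_mul (Real.sqrt_le_sqrt (hbx i)) (Real.sqrt_le_sqrt (hby i))
                (Real.sqrt_nonneg _) (Real.sqrt_nonneg _)

/-- Theorem 1 (separability criterion): if `ρ` is separable then
`‖M_{α,β}^l(ρ)‖_tr ≤ √((lα²+1)(lβ²+1))`. -/
theorem separable_traceNorm_Mblock_le {dA dB N : ℕ}
    (p : Fin N → ℝ) (ρA : Fin N → Matrix (Fin dA) (Fin dA) ℂ)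
    (ρB : Fin N → Matrix (Fin dB) (Fin dB) ℂ)
    (hp : ∀ i, 0 ≤ p i) (hp1 : ∑ i, p i = 1)
    (hApsd : ∀ i, (ρA i).PosSemidef) (hBpsd : ∀ i, (ρB i).PosSemidef)
    (hA1 : ∀ i, (ρA i).trace = 1) (hB1 : ∀ i, (ρB i).trace = 1)
    (hA2 : ∀ i, (ρA i * ρA i).trace = 1) (hB2 : ∀ i, (ρB i * ρB i).trace = 1)
    (ρ : Matrix (Fin dA × Fin dB) (Fin dA × Fin dB) ℂ)
    (hρ : ρ = ∑ i, p i • (ρA i ⊗ₖ ρB i))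
    (α β : ℝ) (l : ℕ) :
    traceNorm (Mblock α β l ρ) ≤
      Real.sqrt ((l * α ^ 2 + 1) * (l * β ^ 2 + 1)) := by
  classical
  -- hermitian entries
  have hAH : ∀ i (a b : Fin dA), star (ρA i a b) = ρA i b a := by
    intro i a b
    conv_rhs => rw [← (hApsd i).1]
    simp [Matrix.conjTranspose_apply]
  have hBH : ∀ i (a b : Fin dB), star (ρB i a b) = ρB i b a := by
    intro i a b
    conv_rhs => rw [← (hBpsd i).1]
    simp [Matrix.conjTranspose_apply]
  -- traces as sums
  have htrA : ∀ i, ∑ k, ρA i k k = 1 := fun i => by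
    simpa [Matrix.trace, Matrix.diag] using hA1 i
  have htrB : ∀ i, ∑ k, ρB i k k = 1 := fun i => by
    simpa [Matrix.trace, Matrix.diag] using hB1 i
  -- purity as sums of squared norms
  have hX2 : ∀ i, ∑ a, ∑ b, ‖ρA i a b‖ ^ 2 = 1 := by
    intro i
    have h := hA2 i
    have he : (ρA i * ρA i).trace = ∑ a, ∑ b, ((‖ρA i a b‖ ^ 2 : ℝ) : ℂ) := by
      simp only [Matrix.trace, Matrix.diag, Matrix.mul_apply]
      refine Finset.sum_congr rfl fun a _ => Finset.sum_congr rfl fun b _ => ?_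
      rw [← hAH i a b, Complex.star_def, Complex.mul_conj, Complex.normSq_eq_norm_sq]
    rw [he] at h
    exact_mod_cast h
  have hY2 : ∀ i, ∑ a, ∑ b, ‖ρB i a b‖ ^ 2 = 1 := by
    intro i
    have h := hB2 i
    have he : (ρB i * ρB i).trace = ∑ a, ∑ b, ((‖ρB i a b‖ ^ 2 : ℝ) : ℂ) := by
      simp only [Matrix.trace, Matrix.diag, Matrix.mul_apply]
      refine Finset.sum_congr rfl fun a _ => Finset.sum_congr rfl fun b _ => ?_
      rw [← hBH i a b, Complex.star_def, Complex.mul_conj, Complex.normSq_eq_norm_sq]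
    rw [he] at h
    exact_mod_cast h
  -- partial traces
  have hptrA : ptrA ρ = ∑ i, (p i : ℂ) • ρB i := by
    ext a b
    simp only [ptrA, Matrix.of_apply, hρ, Matrix.sum_apply, Matrix.smul_apply,
      Matrix.kroneckerMap_apply, smul_eq_mul, Complex.real_smul]
    rw [Finset.sum_comm]
    refine Finset.sum_congr rfl fun i _ => ?_
    have : ∑ k, (p i : ℂ) * (ρA i k k * ρB i a b)
        = (∑ k, ρA i k k) * ((p i : ℂ) * ρB i a b) := by
      rw [Finset.sum_mul]
      exact Finset.sum_congr rfl fun k _ => by ring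
    rw [this, htrA i, one_mul]
  have hptrB : ptrB ρ = ∑ i, (p i : ℂ) • ρA i := by
    ext a b
    simp only [ptrB, Matrix.of_apply, hρ, Matrix.sum_apply, Matrix.smul_apply,
      Matrix.kroneckerMap_apply, smul_eq_mul, Complex.real_smul]
    rw [Finset.sum_comm]
    refine Finset.sum_congr rfl fun i _ => ?_
    have : ∑ k, (p i : ℂ) * (ρA i a b * ρB i k k)
        = (∑ k, ρB i k k) * ((p i : ℂ) * ρA i a b) := by
      rw [Finset.sum_mul]
      exact Finset.sum_congr rfl fun k _ => by ring
    rw [this, htrB i, one_mul]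
  -- rank-one decomposition of the block matrix
  set x : Fin N → (Fin l ⊕ Fin dA × Fin dA) → ℂ :=
    fun i => Sum.elim (fun _ => (α : ℂ)) (fun r => ρA i r.2 r.1) with hxdef
  set y : Fin N → (Fin l ⊕ Fin dB × Fin dB) → ℂ :=
    fun i => Sum.elim (fun _ => (β : ℂ)) (fun c => ρB i c.1 c.2) with hydef
  have hsump : (∑ i, (p i : ℂ)) = 1 := by exact_mod_cast congrArg Complex.ofReal hp1
  have hrep : ∀ r s, Mblock α β l ρ r s = ∑ i, (p i : ℂ) * x i r * star (y i s) := by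
    intro r s
    rcases r with t | a <;> rcases s with t' | b
    · simp only [Mblock, Matrix.fromBlocks_apply₁₁, Matrix.of_apply, hxdef, hydef,
        Sum.elim_inl, Complex.star_def, Complex.conj_ofReal]
      rw [show (∑ i, (p i : ℂ) * ↑α * ↑β) = (∑ i, (p i : ℂ)) * (↑α * ↑β) from by
        rw [Finset.sum_mul]; exact Finset.sum_congr rfl fun i _ => by ring]
      rw [hsump, one_mul]
      push_cast
      ring
    · simp only [Mblock, Matrix.fromBlocks_apply₁₂, Matrix.of_apply, hxdef, hydef,
        Sum.elim_inl, Sum.elim_inr, _root_.vec, hptrA, Matrix.sum_apply, Matrix.smul_apply,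
        smul_eq_mul, Finset.mul_sum]
      refine Finset.sum_congr rfl fun i _ => ?_
      rw [hBH i b.1 b.2]
      ring
    · simp only [Mblock, Matrix.fromBlocks_apply₂₁, Matrix.of_apply, hxdef, hydef,
        Sum.elim_inl, Sum.elim_inr, _root_.vec, hptrB, Matrix.sum_apply, Matrix.smul_apply,
        smul_eq_mul, Finset.mul_sum, Complex.star_def, Complex.conj_ofReal]
      refine Finset.sum_congr rfl fun i _ => ?_
      ring
    · simp only [Mblock, Matrix.fromBlocks_apply₂₂, Matrix.of_apply, hxdef, hydef,
        Sum.elim_inr, realign, hρ, Matrix.sum_apply, Matrix.smul_apply,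
        Matrix.kroneckerMap_apply, smul_eq_mul, Complex.real_smul]
      refine Finset.sum_congr rfl fun i _ => ?_
      rw [hBH i b.1 b.2]
      ring
  have key := traceNorm_le_of_rep (Mblock α β l ρ) p x y hp hrep
  -- compute the norms
  have hxn : ∀ i, ∑ r, ‖x i r‖ ^ 2 = l * α ^ 2 + 1 := by
    intro i
    rw [Fintype.sum_sum_type]
    simp only [hxdef, Sum.elim_inl, Sum.elim_inr, Complex.norm_real]
    rw [Finset.sum_const, Finset.card_univ, Fintype.card_fin, nsmul_eq_mul, Real.norm_eq_abs, sq_abs]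
    congr 1
    rw [show (∑ ab : Fin dA × Fin dA, ‖ρA i ab.2 ab.1‖ ^ 2)
        = ∑ a, ∑ b, ‖ρA i a b‖ ^ 2 from by
      rw [Fintype.sum_prod_type]; exact Finset.sum_comm]
    exact hX2 i
  have hyn : ∀ i, ∑ s, ‖y i s‖ ^ 2 = l * β ^ 2 + 1 := by
    intro i
    rw [Fintype.sum_sum_type]
    simp only [hydef, Sum.elim_inl, Sum.elim_inr, Complex.norm_real]
    rw [Finset.sum_const, Finset.card_univ, Fintype.card_fin, nsmul_eq_mul, Real.norm_eq_abs, sq_abs]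
    congr 1
    rw [show (∑ ab : Fin dB × Fin dB, ‖ρB i ab.1 ab.2‖ ^ 2)
        = ∑ a, ∑ b, ‖ρB i a b‖ ^ 2 from by rw [Fintype.sum_prod_type]]
    exact hY2 i
  refine key.trans (le_of_eq ?_)
  calc ∑ i, p i * (Real.sqrt (∑ r, ‖x i r‖ ^ 2) * Real.sqrt (∑ s, ‖y i s‖ ^ 2))
      = ∑ i, p i * (Real.sqrt (l * α ^ 2 + 1) * Real.sqrt (l * β ^ 2 + 1)) := by
        exact Finset.sum_congr rfl fun i _ => by rw [hxn i, hyn i]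
    _ = (∑ i, p i) * (Real.sqrt (l * α ^ 2 + 1) * Real.sqrt (l * β ^ 2 + 1)) := by
        rw [Finset.sum_mul]
    _ = Real.sqrt ((l * α ^ 2 + 1) * (l * β ^ 2 + 1)) := by
        rw [hp1, one_mul, ← Real.sqrt_mul (by positivity)]
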